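/- Let K ⊆ ℝ³ be a regular convex cone such that diag(λ,1,1)[K] = K for all λ > 0, i.e., K is invariant under multiplication of the first coordinate by an arbitrary positive number. Then K is simplicial: K is isomorphic to the positive orthant ℝ₊³, i.e., K is the conic convex hull of three linearly independent vectors. -/

import Mathlib

open Set

/-- A regular convex cone: closed, convex, invariant under positive scalings,
with nonempty interior, containing no line (pointed). -/
def IsRegularCone {n : ℕ} (K : Set (Fin n → ℝ)) : Prop :=
  IsClosed K ∧ Convex ℝ K ∧ (∀ c : ℝ, 0 < c → ∀ x ∈ K, c • x ∈ K) ∧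
    (interior K).Nonempty ∧ ∀ x ∈ K, -x ∈ K → x = 0

/-- Two cones in ℝ³ are isomorphic if a linear automorphism maps one onto the other. -/
def ConeIso (K K' : Set (Fin 3 → ℝ)) : Prop :=
  ∃ S : Matrix (Fin 3) (Fin 3) ℝ, IsUnit S.det ∧ (fun v => S.mulVec v) '' K = K'

section AuxLemmas
open Filter Topology

lemma aux_zero_mem (K : Set (Fin 3 → ℝ)) (hcl : IsClosed K)
    (hcone : ∀ c : ℝ, 0 < c → ∀ x ∈ K, c • x ∈ K) (hne : K.Nonempty) :
    (0 : Fin 3 → ℝ) ∈ K := by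
  obtain ⟨x, hx⟩ := hne
  have hc : Filter.Tendsto (fun c : ℝ => c • x) (𝓝[>] 0) (𝓝 0) := by
    have h1 : Continuous fun c : ℝ => c • x := continuous_id.smul continuous_const
    have := h1.tendsto 0
    rw [zero_smul] at this
    exact this.mono_left nhdsWithin_le_nhds
  exact hcl.mem_of_tendsto hc
    (Filter.eventually_iff.mpr self_mem_nhdsWithin |>.mono fun c hc => hcone c hc x hx)

lemma aux_add_mem (K : Set (Fin 3 → ℝ)) (hconv : Convex ℝ K)
    (hcone : ∀ c : ℝ, 0 < c → ∀ x ∈ K, c • x ∈ K) {x y : Fin 3 → ℝ}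
    (hx : x ∈ K) (hy : y ∈ K) : x + y ∈ K := by
  have hmid : (1/2 : ℝ) • x + (1/2 : ℝ) • y ∈ K :=
    hconv hx hy (by norm_num) (by norm_num) (by norm_num)
  have := hcone 2 (by norm_num) _ hmid
  rwa [smul_add, smul_smul, smul_smul, show (2:ℝ) * (1/2) = 1 by norm_num, one_smul,
    one_smul] at this

lemma aux_smul_mem (K : Set (Fin 3 → ℝ)) (hcl : IsClosed K)
    (hcone : ∀ c : ℝ, 0 < c → ∀ x ∈ K, c • x ∈ K) (hne : K.Nonempty)
    {a : ℝ} (ha : 0 ≤ a) {x : Fin 3 → ℝ} (hx : x ∈ K) : a • x ∈ K := by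
  rcases eq_or_lt_of_le ha with h | h
  · rw [← h, zero_smul]; exact aux_zero_mem K hcl hcone hne
  · exact hcone a h x hx

lemma aux_proj_mem (K : Set (Fin 3 → ℝ)) (hcl : IsClosed K)
    (hinv : ∀ lam : ℝ, 0 < lam →
      (fun v : Fin 3 → ℝ => ![lam * v 0, v 1, v 2]) '' K = K)
    {x : Fin 3 → ℝ} (hx : x ∈ K) : ![0, x 1, x 2] ∈ K := by
  have hmem : ∀ c : ℝ, c ∈ Ioi (0:ℝ) → ![c * x 0, x 1, x 2] ∈ K := fun c hc =>
    (hinv c hc) ▸ Set.mem_image_of_mem _ hx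
  have hcont : Continuous fun c : ℝ => (![c * x 0, x 1, x 2] : Fin 3 → ℝ) := by
    apply continuous_pi
    intro i
    fin_cases i <;> simp <;> fun_prop
  have ht : Filter.Tendsto (fun c : ℝ => (![c * x 0, x 1, x 2] : Fin 3 → ℝ)) (𝓝[>] 0)
      (𝓝 ![0, x 1, x 2]) := by
    have := hcont.tendsto 0
    rw [show (0:ℝ) * x 0 = 0 by ring] at this
    exact this.mono_left nhdsWithin_le_nhds
  exact hcl.mem_of_tendsto ht
    (Filter.eventually_iff.mpr self_mem_nhdsWithin |>.mono fun c hc => hmem c hc)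

lemma aux_axis_mem (K : Set (Fin 3 → ℝ)) (hcl : IsClosed K)
    (hcone : ∀ c : ℝ, 0 < c → ∀ x ∈ K, c • x ∈ K)
    (hinv : ∀ lam : ℝ, 0 < lam →
      (fun v : Fin 3 → ℝ => ![lam * v 0, v 1, v 2]) '' K = K)
    {x : Fin 3 → ℝ} (hx : x ∈ K) : ![x 0, 0, 0] ∈ K := by
  have hmem : ∀ c : ℝ, c ∈ Ioi (0:ℝ) → ![x 0, c * x 1, c * x 2] ∈ K := by
    intro c hc
    have h1 : (![c⁻¹ * x 0, x 1, x 2] : Fin 3 → ℝ) ∈ K :=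
      (hinv c⁻¹ (inv_pos.mpr hc)) ▸ Set.mem_image_of_mem _ hx
    have h2 := hcone c hc _ h1
    have h3 : c • (![c⁻¹ * x 0, x 1, x 2] : Fin 3 → ℝ) = ![x 0, c * x 1, c * x 2] := by
      funext j
      have hc0 : c ≠ 0 := ne_of_gt hc
      fin_cases j <;> simp [mul_comm] <;> field_simp
    rwa [h3] at h2
  have hcont : Continuous fun c : ℝ => (![x 0, c * x 1, c * x 2] : Fin 3 → ℝ) := by
    apply continuous_pi
    intro i
    fin_cases i <;> simp <;> fun_prop
  have ht : Filter.Tendsto (fun c : ℝ => (![x 0, c * x 1, c * x 2] : Fin 3 → ℝ)) (𝓝[>] 0)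
      (𝓝 ![x 0, 0, 0]) := by
    have := hcont.tendsto 0
    rw [show (0:ℝ) * x 1 = 0 by ring, show (0:ℝ) * x 2 = 0 by ring] at this
    exact this.mono_left nhdsWithin_le_nhds
  exact hcl.mem_of_tendsto ht
    (Filter.eventually_iff.mpr self_mem_nhdsWithin |>.mono fun c hc => hmem c hc)

lemma aux_interior_pt (K : Set (Fin 3 → ℝ)) (hint : (interior K).Nonempty) :
    ∃ y ∈ interior K, y 0 ≠ 0 := by
  obtain ⟨y₀, hy₀⟩ := hint
  by_cases h : y₀ 0 ≠ 0
  · exact ⟨y₀, hy₀, h⟩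
  push_neg at h
  have hcont : Continuous fun t : ℝ => y₀ + t • (![1,0,0] : Fin 3 → ℝ) := by fun_prop
  have hU : IsOpen ((fun t : ℝ => y₀ + t • (![1,0,0] : Fin 3 → ℝ)) ⁻¹' interior K) :=
    isOpen_interior.preimage hcont
  have h0 : (0:ℝ) ∈ (fun t : ℝ => y₀ + t • (![1,0,0] : Fin 3 → ℝ)) ⁻¹' interior K := by
    simp only [mem_preimage, zero_smul, add_zero]
    exact hy₀
  obtain ⟨ε, hε, hball⟩ := Metric.isOpen_iff.mp hU 0 h0
  refine ⟨y₀ + (ε/2) • ![1,0,0], hball ?_, ?_⟩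
  · simp only [Metric.mem_ball, Real.dist_eq, sub_zero]
    rw [abs_of_pos (by linarith)]
    linarith
  · simp [h]
    positivity

lemma aux_eps (K : Set (Fin 3 → ℝ)) (hcl : IsClosed K)
    (hcone : ∀ c : ℝ, 0 < c → ∀ x ∈ K, c • x ∈ K)
    (hpointed : ∀ x ∈ K, -x ∈ K → x = 0)
    (haxis : ∀ x ∈ K, (![x 0, 0, 0] : Fin 3 → ℝ) ∈ K)
    {y : Fin 3 → ℝ} (hy : y ∈ K) (hy0 : y 0 ≠ 0) :
    ∃ ε : ℝ, (ε = 1 ∨ ε = -1) ∧ (![ε,0,0] : Fin 3 → ℝ) ∈ K ∧ ∀ x ∈ K, 0 ≤ ε * x 0 := by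
  have key : ∀ x ∈ K, x 0 ≠ 0 → (![x 0 / |x 0|, 0, 0] : Fin 3 → ℝ) ∈ K := by
    intro x hx hx0
    have h1 := haxis x hx
    have h2 := hcone (|x 0|)⁻¹ (by positivity) _ h1
    have h3 : (|x 0|)⁻¹ • (![x 0, 0, 0] : Fin 3 → ℝ) = ![x 0 / |x 0|, 0, 0] := by
      funext j
      fin_cases j <;> simp [div_eq_inv_mul]
    rwa [h3] at h2
  set ε : ℝ := y 0 / |y 0| with hεdef
  have hε : ε = 1 ∨ ε = -1 := by
    rcases lt_or_gt_of_ne hy0 with h | h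
    · right; rw [hεdef, abs_of_neg h]; field_simp
    · left; rw [hεdef, abs_of_pos h]; field_simp
  refine ⟨ε, hε, key y hy hy0, ?_⟩
  intro x hx
  by_contra hneg
  push_neg at hneg
  have hx0 : x 0 ≠ 0 := by
    intro h; rw [h, mul_zero] at hneg; exact lt_irrefl 0 hneg
  have hmem := key x hx hx0
  have hopp : x 0 / |x 0| = -ε := by
    rcases hε with h | h
    · rw [h] at hneg ⊢
      have hlt : x 0 < 0 := by linarith
      rw [abs_of_neg hlt]; field_simp
    · rw [h] at hneg ⊢
      have hlt : 0 < x 0 := by nlinarith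
      rw [abs_of_pos hlt]; field_simp
  rw [hopp] at hmem
  have hmem' : -(![ε,0,0] : Fin 3 → ℝ) ∈ K := by
    have : -(![ε,0,0] : Fin 3 → ℝ) = ![-ε,0,0] := by
      funext j; fin_cases j <;> simp
    rwa [this]
  have := hpointed _ (key y hy hy0) hmem'
  have h0 : y 0 = 0 := by simpa using congrFun this 0
  exact hy0 h0

lemma aux_planar (C : Set (Fin 3 → ℝ)) (hcl : IsClosed C) (hconv : Convex ℝ C)
    (hsmul : ∀ a : ℝ, 0 ≤ a → ∀ x ∈ C, a • x ∈ C)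
    (hadd : ∀ x ∈ C, ∀ y ∈ C, x + y ∈ C)
    (hpointed : ∀ x ∈ C, -x ∈ C → x = 0)
    (hplane : ∀ x ∈ C, x 0 = 0)
    {p : Fin 3 → ℝ} (hp : p ∈ C) (hpne : p ≠ 0) :
    ∃ u w : Fin 3 → ℝ, u ∈ C ∧ w ∈ C ∧
      ∀ x ∈ C, ∃ b c : ℝ, 0 ≤ b ∧ 0 ≤ c ∧ x = b • u + c • w := by
  have h0C : (0 : Fin 3 → ℝ) ∈ C := by
    have := hsmul 0 le_rfl p hp; rwa [zero_smul] at this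
  -- separation
  have hnp : -p ∉ C := fun h => hpne (hpointed p hp h)
  obtain ⟨f, u, hfu, hsep⟩ := geometric_hahn_banach_point_closed hconv hcl hnp
  have hu0 : u < 0 := by have := hsep 0 h0C; rwa [map_zero] at this
  have hfnn : ∀ x ∈ C, 0 ≤ f x := by
    intro x hx
    by_contra hneg
    push_neg at hneg
    have ht : 0 < u / f x := div_pos_of_neg_of_neg hu0 hneg
    have := hsep _ (hsmul _ ht.le x hx)
    rw [map_smul, smul_eq_mul, div_mul_cancel₀ _ (ne_of_lt hneg)] at this
    exact lt_irrefl u this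
  have hfp : 0 < f p := by
    rw [map_neg] at hfu; linarith
  -- coordinates of f on the plane
  set c₁ : ℝ := f ![0,1,0] with hc₁
  set c₂ : ℝ := f ![0,0,1] with hc₂
  have hexp : ∀ z : Fin 3 → ℝ, z 0 = 0 → f z = z 1 * c₁ + z 2 * c₂ := by
    intro z hz0
    have hz : z = z 1 • ![0,1,0] + z 2 • ![0,0,1] := by
      funext j; fin_cases j <;> simp [hz0]
    rw [hz, map_add, map_smul, map_smul, smul_eq_mul, smul_eq_mul, ← hz]
  have hc : 0 < c₁^2 + c₂^2 := by
    rcases eq_or_lt_of_le (by positivity : (0:ℝ) ≤ c₁^2 + c₂^2) with h | h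
    · exfalso
      have h1 : c₁ = 0 := by nlinarith [sq_nonneg c₁, sq_nonneg c₂]
      have h2 : c₂ = 0 := by nlinarith [sq_nonneg c₁, sq_nonneg c₂]
      rw [hexp p (hplane p hp), h1, h2] at hfp
      simp at hfp
    · exact h
  have hcne : c₁^2 + c₂^2 ≠ 0 := ne_of_gt hc
  -- the direction d of the line (ker f) ∩ plane
  set d : Fin 3 → ℝ := ![0, -c₂, c₁] with hd
  have hker : ∀ z : Fin 3 → ℝ, z 0 = 0 → f z = 0 →
      z = ((z 2 * c₁ - z 1 * c₂)/(c₁^2+c₂^2)) • d := by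
    intro z hz0 hzf
    rw [hexp z hz0] at hzf
    have e1 : z 1 = ((z 2 * c₁ - z 1 * c₂)/(c₁^2+c₂^2)) * (-c₂) := by
      field_simp
      linear_combination c₁ * hzf
    have e2 : z 2 = ((z 2 * c₁ - z 1 * c₂)/(c₁^2+c₂^2)) * c₁ := by
      field_simp
      linear_combination c₂ * hzf
    funext j
    fin_cases j
    · simpa [hd] using hz0
    · simpa [hd] using e1
    · simpa [hd] using e2
  -- base point
  set x₀ : Fin 3 → ℝ := (f p)⁻¹ • p with hx₀
  have hx₀C : x₀ ∈ C := hsmul _ (inv_nonneg.mpr hfp.le) p hp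
  have hx₀f : f x₀ = 1 := by rw [hx₀, map_smul, smul_eq_mul, inv_mul_cancel₀ (ne_of_gt hfp)]
  have hx₀0 : x₀ 0 = 0 := by rw [hx₀]; simp [hplane p hp]
  set I : Set ℝ := {t : ℝ | x₀ + t • d ∈ C} with hI
  have h0I : (0:ℝ) ∈ I := by simp only [hI, mem_setOf_eq, zero_smul, add_zero]; exact hx₀C
  have hmemI : ∀ t : ℝ, 0 ≤ t → d ∈ C → t ∈ I :=
    fun t ht hdC => hadd _ hx₀C _ (hsmul t ht d hdC)
  have hdpos : d ∈ C → ¬ BddAbove I := by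
    rintro hdC ⟨M, hM⟩
    have hM0 : 0 ≤ M := hM h0I
    have := hM (hmemI (M+1) (by linarith) hdC)
    linarith
  have hmemI' : ∀ t : ℝ, t ≤ 0 → -d ∈ C → t ∈ I := by
    intro t ht hdC
    have h2 : x₀ + t • d = x₀ + (-t) • (-d) := by module
    rw [hI, mem_setOf_eq, h2]
    exact hadd _ hx₀C _ (hsmul (-t) (by linarith) _ hdC)
  have hdneg : -d ∈ C → ¬ BddBelow I := by
    rintro hdC ⟨M, hM⟩
    have hM0 : M ≤ 0 := hM h0I
    have := hM (hmemI' (M-1) (by linarith) hdC)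
    linarith
  -- unbounded implies direction in C
  have hunbA : ¬ BddAbove I → d ∈ C := by
    intro hA
    rw [not_bddAbove_iff] at hA
    choose g hgI hgn using fun n : ℕ => hA n
    have hgpos : ∀ n : ℕ, 0 < g n := fun n => lt_of_le_of_lt (Nat.cast_nonneg n) (hgn n)
    have hmem : ∀ n : ℕ, (g n)⁻¹ • x₀ + d ∈ C := by
      intro n
      have hgne : g n ≠ 0 := ne_of_gt (hgpos n)
      have h1 := hsmul (g n)⁻¹ (inv_nonneg.mpr (hgpos n).le) _ (hgI n)
      have h2 : (g n)⁻¹ • (x₀ + g n • d) = (g n)⁻¹ • x₀ + d := by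
        match_scalars <;> field_simp
      rwa [h2] at h1
    have htend : Filter.Tendsto (fun n : ℕ => (g n)⁻¹ • x₀ + d) atTop (𝓝 d) := by
      have h1 : Filter.Tendsto g atTop atTop :=
        tendsto_atTop_mono (fun n => (hgn n).le) tendsto_natCast_atTop_atTop
      have h2 := (h1.inv_tendsto_atTop.smul_const x₀).add_const d
      rwa [zero_smul, zero_add] at h2
    exact hcl.mem_of_tendsto htend (Filter.Eventually.of_forall hmem)
  have hunbB : ¬ BddBelow I → -d ∈ C := by
    intro hB
    rw [not_bddBelow_iff] at hB
    choose g hgI hgn using fun n : ℕ => hB (-(n:ℝ))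
    have hgneg : ∀ n : ℕ, g n < 0 := by
      intro n
      have h1 := hgn n
      have h2 : -(n:ℝ) ≤ 0 := neg_nonpos.mpr (Nat.cast_nonneg n)
      linarith
    have hmem : ∀ n : ℕ, (-(g n))⁻¹ • x₀ + -d ∈ C := by
      intro n
      have hgne : g n ≠ 0 := ne_of_lt (hgneg n)
      have h1 := hsmul (-(g n))⁻¹ (inv_nonneg.mpr (by linarith [hgneg n])) _ (hgI n)
      have h2 : (-(g n))⁻¹ • (x₀ + g n • d) = (-(g n))⁻¹ • x₀ + -d := by
        match_scalars <;> field_simp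
      rwa [h2] at h1
    have htend : Filter.Tendsto (fun n : ℕ => (-(g n))⁻¹ • x₀ + -d) atTop (𝓝 (-d)) := by
      have h1 : Filter.Tendsto (fun n => -(g n)) atTop atTop := by
        apply tendsto_atTop_mono _ tendsto_natCast_atTop_atTop
        intro n
        have := hgn n; linarith
      have h2 := (h1.inv_tendsto_atTop.smul_const x₀).add_const (-d)
      rwa [zero_smul, zero_add] at h2
    exact hcl.mem_of_tendsto htend (Filter.Eventually.of_forall hmem)
  -- decomposition of elements with positive functional value
  have hdecomp : ∀ x ∈ C, 0 < f x → ∃ s ∈ I, x = (f x) • (x₀ + s • d) := by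
    intro x hx hfx
    set z : Fin 3 → ℝ := (f x)⁻¹ • x with hz
    have hzC : z ∈ C := hsmul _ (inv_nonneg.mpr hfx.le) x hx
    have hz0 : (z - x₀) 0 = 0 := by
      simp [hz, hx₀, hplane x hx, hplane p hp]
    have hzf : f (z - x₀) = 0 := by
      rw [map_sub, hx₀f, hz, map_smul, smul_eq_mul, inv_mul_cancel₀ (ne_of_gt hfx), sub_self]
    obtain hzd := hker _ hz0 hzf
    refine ⟨(((z - x₀) 2) * c₁ - ((z - x₀) 1) * c₂)/(c₁^2+c₂^2), ?_, ?_⟩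
    · show x₀ + _ • d ∈ C
      have h2 : x₀ + ((((z - x₀) 2) * c₁ - ((z - x₀) 1) * c₂)/(c₁^2+c₂^2)) • d = z := by
        rw [← hzd]; module
      rwa [h2]
    · rw [show x₀ + ((((z - x₀) 2) * c₁ - ((z - x₀) 1) * c₂)/(c₁^2+c₂^2)) • d = z by
        rw [← hzd]; module, hz, smul_smul, mul_inv_cancel₀ (ne_of_gt hfx), one_smul]
  -- elements with zero functional value lie on the line through d
  have hray : ∀ x ∈ C, f x = 0 → ∃ s : ℝ, x = s • d := by
    intro x hx hfx
    exact ⟨_, hker x (hplane x hx) hfx⟩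
  have hraypos : ∀ (s : ℝ) (x : Fin 3 → ℝ), x ∈ C → x = s • d → 0 < s → d ∈ C := by
    intro s x hx hxd hs
    have := hsmul s⁻¹ (inv_nonneg.mpr hs.le) x hx
    rwa [hxd, smul_smul, inv_mul_cancel₀ (ne_of_gt hs), one_smul] at this
  have hrayneg : ∀ (s : ℝ) (x : Fin 3 → ℝ), x ∈ C → x = s • d → s < 0 → -d ∈ C := by
    intro s x hx hxd hs
    have hsne : s ≠ 0 := ne_of_lt hs
    have h1 := hsmul (-s)⁻¹ (inv_nonneg.mpr (by linarith)) x hx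
    rw [hxd, smul_smul] at h1
    have h2 : (-s)⁻¹ * s = -1 := by
      rw [inv_mul_eq_div]; rw [div_eq_iff (by linarith : (-s : ℝ) ≠ 0)]; ring
    rwa [h2, neg_one_smul] at h1
  have hIne : I.Nonempty := ⟨0, h0I⟩
  have hIcl : IsClosed I := by
    have hcont : Continuous fun t : ℝ => x₀ + t • d := by fun_prop
    exact hcl.preimage hcont
  -- main case analysis
  by_cases hA : BddAbove I <;> by_cases hB : BddBelow I
  · -- both bounded: two endpoints
    have hMI : sSup I ∈ I := hIcl.csSup_mem hIne hA
    have hmI : sInf I ∈ I := hIcl.csInf_mem hIne hB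
    refine ⟨x₀ + sSup I • d, x₀ + sInf I • d, hMI, hmI, ?_⟩
    intro x hx
    rcases (hfnn x hx).eq_or_lt with hfx | hfx
    · obtain ⟨s, hxd⟩ := hray x hx hfx.symm
      rcases lt_trichotomy s 0 with hs | hs | hs
      · exact absurd hB (hdneg (hrayneg s x hx hxd hs))
      · refine ⟨0, 0, le_rfl, le_rfl, ?_⟩
        rw [hxd, hs]; module
      · exact absurd hA (hdpos (hraypos s x hx hxd hs))
    · obtain ⟨s, hsI, hxeq⟩ := hdecomp x hx hfx
      obtain ⟨F, hF⟩ : ∃ F : ℝ, f x = F := ⟨f x, rfl⟩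
      rw [hF] at hxeq hfx
      have hsM : s ≤ sSup I := le_csSup hA hsI
      have hms : sInf I ≤ s := csInf_le hB hsI
      by_cases hMm : sSup I = sInf I
      · refine ⟨F, 0, hfx.le, le_rfl, ?_⟩
        have hsM' : s = sSup I := le_antisymm hsM (hMm ▸ hms)
        rw [hxeq, hsM']; module
      · have hmM : sInf I < sSup I := lt_of_le_of_ne (hms.trans hsM) (Ne.symm hMm)
        have hMmne : sSup I - sInf I ≠ 0 := sub_ne_zero.mpr (ne_of_gt hmM)
        refine ⟨F * (s - sInf I)/(sSup I - sInf I), F * (sSup I - s)/(sSup I - sInf I),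
          ?_, ?_, ?_⟩
        · exact div_nonneg (mul_nonneg hfx.le (by linarith)) (by linarith)
        · exact div_nonneg (mul_nonneg hfx.le (by linarith)) (by linarith)
        · rw [hxeq]
          match_scalars <;> field_simp <;> ring
  · -- bounded above, unbounded below
    have hMI : sSup I ∈ I := hIcl.csSup_mem hIne hA
    refine ⟨x₀ + sSup I • d, -d, hMI, hunbB hB, ?_⟩
    intro x hx
    rcases (hfnn x hx).eq_or_lt with hfx | hfx
    · obtain ⟨s, hxd⟩ := hray x hx hfx.symm
      rcases lt_or_ge 0 s with hs | hs
      · exact absurd hA (hdpos (hraypos s x hx hxd hs))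
      · refine ⟨0, -s, le_rfl, by linarith, ?_⟩
        rw [hxd]; module
    · obtain ⟨s, hsI, hxeq⟩ := hdecomp x hx hfx
      obtain ⟨F, hF⟩ : ∃ F : ℝ, f x = F := ⟨f x, rfl⟩
      rw [hF] at hxeq hfx
      have hsM : s ≤ sSup I := le_csSup hA hsI
      refine ⟨F, F * (sSup I - s), hfx.le, mul_nonneg hfx.le (by linarith), ?_⟩
      rw [hxeq]; match_scalars <;> ring
  · -- bounded below, unbounded above
    have hmI : sInf I ∈ I := hIcl.csInf_mem hIne hB
    refine ⟨d, x₀ + sInf I • d, hunbA hA, hmI, ?_⟩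
    intro x hx
    rcases (hfnn x hx).eq_or_lt with hfx | hfx
    · obtain ⟨s, hxd⟩ := hray x hx hfx.symm
      rcases lt_or_ge s 0 with hs | hs
      · exact absurd hB (hdneg (hrayneg s x hx hxd hs))
      · refine ⟨s, 0, hs, le_rfl, ?_⟩
        rw [hxd]; module
    · obtain ⟨s, hsI, hxeq⟩ := hdecomp x hx hfx
      obtain ⟨F, hF⟩ : ∃ F : ℝ, f x = F := ⟨f x, rfl⟩
      rw [hF] at hxeq hfx
      have hms : sInf I ≤ s := csInf_le hB hsI
      refine ⟨F * (s - sInf I), F, mul_nonneg hfx.le (by linarith), hfx.le, ?_⟩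
      rw [hxeq]; match_scalars <;> ring
  · -- both unbounded: contradiction with pointedness
    exfalso
    have hd0' := hpointed d (hunbA hA) (hunbB hB)
    have h1 : c₁ = 0 := by
      have := congrFun hd0' 2; rw [hd] at this; simpa using this
    have h2 : c₂ = 0 := by
      have := congrFun hd0' 1; rw [hd] at this; simpa using this
    rw [h1, h2] at hc
    norm_num at hc

end AuxLemmas

section Main
open Filter Topology

/-- a regular convex cone in ℝ³ invariant under arbitrary positive
scalings of the first coordinate is simplicial: it is isomorphic to the positive
orthant, i.e., it is the conic convex hull of three linearly independent vectors. -/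
theorem cone_invariant_first_coordinate_scaling_is_simplicial
    (K : Set (Fin 3 → ℝ)) (hK : IsRegularCone K)
    (hinv : ∀ lam : ℝ, 0 < lam →
      (fun v : Fin 3 → ℝ => ![lam * v 0, v 1, v 2]) '' K = K) :
    ConeIso K {v | ∀ i, 0 ≤ v i} ∧
    ∃ u₁ u₂ u₃ : Fin 3 → ℝ, LinearIndependent ℝ ![u₁, u₂, u₃] ∧
      K = {x | ∃ a b c : ℝ, 0 ≤ a ∧ 0 ≤ b ∧ 0 ≤ c ∧ x = a • u₁ + b • u₂ + c • u₃} := by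
  obtain ⟨hcl, hconv, hcone, hint, hpointed⟩ := hK
  obtain ⟨y, hyint, hy0⟩ := aux_interior_pt K hint
  have hyK : y ∈ K := interior_subset hyint
  have hKne : K.Nonempty := ⟨y, hyK⟩
  have h0K : (0 : Fin 3 → ℝ) ∈ K := aux_zero_mem K hcl hcone hKne
  obtain ⟨ε, hε, hu₁K, hsign⟩ :=
    aux_eps K hcl hcone hpointed (fun x hx => aux_axis_mem K hcl hcone hinv hx) hyK hy0
  have hε2 : ε * ε = 1 := by rcases hε with h | h <;> rw [h] <;> norm_num
  -- the planar slice
  set C : Set (Fin 3 → ℝ) := K ∩ {x | x 0 = 0} with hCdef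
  have hCsub : C ⊆ K := inter_subset_left
  have hCcl : IsClosed C := hcl.inter (isClosed_eq (continuous_apply 0) continuous_const)
  have hCconv : Convex ℝ C := by
    apply hconv.inter
    intro x hx z hz a b ha hb hab
    simp only [mem_setOf_eq] at hx hz ⊢
    simp only [Pi.add_apply, Pi.smul_apply, hx, hz, smul_eq_mul, mul_zero, add_zero]
  have hCsmul : ∀ a : ℝ, 0 ≤ a → ∀ x ∈ C, a • x ∈ C := by
    intro a ha x hx
    refine ⟨aux_smul_mem K hcl hcone hKne ha (hCsub hx), ?_⟩
    show (a • x) 0 = 0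
    rw [Pi.smul_apply, show x 0 = 0 from hx.2, smul_eq_mul, mul_zero]
  have hCadd : ∀ x ∈ C, ∀ z ∈ C, x + z ∈ C := by
    intro x hx z hz
    refine ⟨aux_add_mem K hconv hcone (hCsub hx) (hCsub hz), ?_⟩
    show (x + z) 0 = 0
    rw [Pi.add_apply, show x 0 = 0 from hx.2, show z 0 = 0 from hz.2, add_zero]
  have hCpointed : ∀ x ∈ C, -x ∈ C → x = 0 :=
    fun x hx hnx => hpointed x (hCsub hx) (hCsub hnx)
  have hCplane : ∀ x ∈ C, x 0 = 0 := fun x hx => hx.2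
  have hprojC : ∀ x ∈ K, (![0, x 1, x 2] : Fin 3 → ℝ) ∈ C := by
    intro x hx
    exact ⟨aux_proj_mem K hcl hinv hx, rfl⟩
  -- the projection of the interior point is nonzero
  set p : Fin 3 → ℝ := ![0, y 1, y 2] with hpdef
  have hpC : p ∈ C := hprojC y hyK
  have hpne : p ≠ 0 := by
    intro hp0
    have hy1 : y 1 = 0 := by have := congrFun hp0 1; simpa [hpdef] using this
    have hy2 : y 2 = 0 := by have := congrFun hp0 2; simpa [hpdef] using this
    obtain ⟨r, hr, hball⟩ := Metric.isOpen_iff.mp isOpen_interior y hyint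
    set w : Fin 3 → ℝ := ![0, r/2, 0] with hwdef
    have hr2 : (0:ℝ) ≤ r/2 := by linarith
    have hwn : ‖w‖ ≤ r/2 := by
      rw [pi_norm_le_iff_of_nonneg hr2]
      intro i
      fin_cases i <;> simp [hwdef, Real.norm_eq_abs, abs_of_pos hr] <;> linarith
    have hw1 : y + w ∈ K := by
      apply interior_subset (hball _)
      rw [Metric.mem_ball, dist_eq_norm]
      have : y + w - y = w := by ring_nf
      rw [this]
      linarith
    have hw2 : y - w ∈ K := by
      apply interior_subset (hball _)
      rw [Metric.mem_ball, dist_eq_norm]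
      have : y - w - y = -w := by ring_nf
      rw [this, norm_neg]
      linarith
    have hm1 : (![0, r/2, 0] : Fin 3 → ℝ) ∈ K := by
      have := aux_proj_mem K hcl hinv hw1
      have he : (![0, (y+w) 1, (y+w) 2] : Fin 3 → ℝ) = ![0, r/2, 0] := by
        funext j; fin_cases j <;> simp [hwdef, hy1, hy2]
      rwa [he] at this
    have hm2 : -(![0, r/2, 0] : Fin 3 → ℝ) ∈ K := by
      have := aux_proj_mem K hcl hinv hw2
      have he : (![0, (y-w) 1, (y-w) 2] : Fin 3 → ℝ) = -![0, r/2, 0] := by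
        funext j; fin_cases j <;> simp [hwdef, hy1, hy2]
      rwa [he] at this
    have := hpointed _ hm1 hm2
    have : (r : ℝ)/2 = 0 := by simpa using congrFun this 1
    linarith
  obtain ⟨u₂, u₃, hu₂C, hu₃C, hcov⟩ :=
    aux_planar C hCcl hCconv hCsmul hCadd hCpointed hCplane hpC hpne
  set u₁ : Fin 3 → ℝ := ![ε, 0, 0] with hu₁def
  -- the main description of K
  have hKeq : K = {x | ∃ a b c : ℝ, 0 ≤ a ∧ 0 ≤ b ∧ 0 ≤ c ∧
      x = a • u₁ + b • u₂ + c • u₃} := by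
    ext x
    constructor
    · intro hx
      obtain ⟨b, c, hb, hc, hbc⟩ := hcov _ (hprojC x hx)
      refine ⟨ε * x 0, b, c, hsign x hx, hb, hc, ?_⟩
      have hx' : x = (ε * x 0) • u₁ + ![0, x 1, x 2] := by
        funext j
        fin_cases j
        · show x 0 = _
          simp [hu₁def]
          linear_combination (x 0) * hε2.symm
        · show x 1 = _; simp [hu₁def]
        · show x 2 = _; simp [hu₁def]
      calc x = (ε * x 0) • u₁ + ![0, x 1, x 2] := hx'
        _ = (ε * x 0) • u₁ + (b • u₂ + c • u₃) := by rw [hbc]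
        _ = (ε * x 0) • u₁ + b • u₂ + c • u₃ := by rw [add_assoc]
    · rintro ⟨a, b, c, ha, hb, hc, rfl⟩
      apply aux_add_mem K hconv hcone
      apply aux_add_mem K hconv hcone
      · exact aux_smul_mem K hcl hcone hKne ha hu₁K
      · exact aux_smul_mem K hcl hcone hKne hb (hCsub hu₂C)
      · exact aux_smul_mem K hcl hcone hKne hc (hCsub hu₃C)
  -- linear independence
  have hKspan : ∀ z ∈ K, z ∈ Submodule.span ℝ (Set.range ![u₁, u₂, u₃]) := by
    intro z hz
    rw [hKeq] at hz
    obtain ⟨a, b, c, _, _, _, rfl⟩ := hz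
    apply Submodule.add_mem
    apply Submodule.add_mem
    · exact Submodule.smul_mem _ _ (Submodule.subset_span ⟨0, rfl⟩)
    · exact Submodule.smul_mem _ _ (Submodule.subset_span ⟨1, rfl⟩)
    · exact Submodule.smul_mem _ _ (Submodule.subset_span ⟨2, rfl⟩)
  have hspan : ⊤ ≤ Submodule.span ℝ (Set.range ![u₁, u₂, u₃]) := by
    rintro v -
    obtain ⟨r, hr, hball⟩ := Metric.isOpen_iff.mp isOpen_interior y hyint
    set δ : ℝ := r / (2 * (‖v‖ + 1)) with hδdef
    have hvpos : (0:ℝ) < ‖v‖ + 1 := by positivity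
    have hδ : 0 < δ := by positivity
    have h1 : y + δ • v ∈ K := by
      apply interior_subset (hball _)
      rw [Metric.mem_ball, dist_eq_norm]
      have he : y + δ • v - y = δ • v := by ring_nf
      rw [he, norm_smul, Real.norm_eq_abs, abs_of_pos hδ]
      rw [hδdef, div_mul_eq_mul_div, div_lt_iff₀ (by positivity)]
      nlinarith [norm_nonneg v, hr]
    have h2 : v = δ⁻¹ • ((y + δ • v) - y) := by
      rw [add_sub_cancel_left, smul_smul, inv_mul_cancel₀ (ne_of_gt hδ), one_smul]
    rw [h2]
    exact Submodule.smul_mem _ _ (Submodule.sub_mem _ (hKspan _ h1) (hKspan _ hyK))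
  have hind : LinearIndependent ℝ ![u₁, u₂, u₃] :=
    linearIndependent_of_top_le_span_of_card_eq_finrank hspan (by simp)
  -- the matrix isomorphism
  refine ⟨?_, u₁, u₂, u₃, hind, hKeq⟩
  set B : Module.Basis (Fin 3) ℝ (Fin 3 → ℝ) :=
    basisOfLinearIndependentOfCardEqFinrank hind (by simp) with hBdef
  have hB : ∀ i, B i = ![u₁, u₂, u₃] i := by
    intro i
    rw [hBdef, coe_basisOfLinearIndependentOfCardEqFinrank]
  set T : (Fin 3 → ℝ) ≃ₗ[ℝ] (Fin 3 → ℝ) :=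
    (Pi.basisFun ℝ (Fin 3)).equiv B (Equiv.refl _) with hTdef
  have hT : ∀ v : Fin 3 → ℝ, T v = v 0 • u₁ + v 1 • u₂ + v 2 • u₃ := by
    intro v
    have hv : v = v 0 • (Pi.basisFun ℝ (Fin 3)) 0 + v 1 • (Pi.basisFun ℝ (Fin 3)) 1
        + v 2 • (Pi.basisFun ℝ (Fin 3)) 2 := by
      funext j
      fin_cases j <;> simp [Pi.basisFun_apply]
    rw [hv]
    simp only [map_add, map_smul, LinearEquiv.coe_coe]
    rw [hTdef]
    simp only [Module.Basis.equiv_apply, Equiv.refl_apply]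
    rw [hB 0, hB 1, hB 2]
    have hv' : v 0 • (Pi.basisFun ℝ (Fin 3)) 0 + v 1 • (Pi.basisFun ℝ (Fin 3)) 1
        + v 2 • (Pi.basisFun ℝ (Fin 3)) 2 = v := hv.symm
    simp [hv']
  set S : Matrix (Fin 3) (Fin 3) ℝ :=
    LinearMap.toMatrix' (T.symm : (Fin 3 → ℝ) →ₗ[ℝ] (Fin 3 → ℝ)) with hSdef
  have hS : ∀ v, S.mulVec v = T.symm v := by
    intro v
    rw [hSdef, ← Matrix.toLin'_apply, Matrix.toLin'_toMatrix']
    rfl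
  have hdet : IsUnit S.det := by
    apply Matrix.isUnit_det_of_right_inverse
      (B := LinearMap.toMatrix' (T : (Fin 3 → ℝ) →ₗ[ℝ] (Fin 3 → ℝ)))
    rw [hSdef, ← LinearMap.toMatrix'_comp]
    have : (T.symm : (Fin 3 → ℝ) →ₗ[ℝ] (Fin 3 → ℝ)) ∘ₗ (T : (Fin 3 → ℝ) →ₗ[ℝ] (Fin 3 → ℝ))
        = LinearMap.id := by
      ext v
      simp
    rw [this, LinearMap.toMatrix'_id]
  refine ⟨S, hdet, ?_⟩
  ext v
  constructor
  · rintro ⟨x, hxK, rfl⟩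
    rw [hKeq] at hxK
    obtain ⟨a, b, c, ha, hb, hc, rfl⟩ := hxK
    have he : a • u₁ + b • u₂ + c • u₃ = T ![a, b, c] := by
      rw [hT]
      simp
    simp only [hS, he, LinearEquiv.symm_apply_apply]
    intro i
    fin_cases i <;> simpa
  · intro hv
    refine ⟨T v, ?_, ?_⟩
    · rw [hKeq]
      exact ⟨v 0, v 1, v 2, hv 0, hv 1, hv 2, hT v⟩
    · show S.mulVec (T v) = v
      rw [hS, LinearEquiv.symm_apply_apply]

end Main
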